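/- The minimum of ½·∫_{-1}^{1} v(t)² dt over all real polynomials v of degree at most p satisfying v(1) = 1 equals 1/(p+1)². -/

import Mathlib

open Polynomial intervalIntegral MeasureTheory

noncomputable def gp (n : ℕ) : Polynomial ℝ := ((X:Polynomial ℝ)^2 - 1)^n

lemma eval_iter_deriv (f : Polynomial ℝ) (r : ℝ) (j : ℕ) :
    (derivative^[j] f).eval r = (j.factorial : ℝ) * (taylor r f).coeff j := by
  rw [taylor_coeff, ← Polynomial.factorial_smul_hasseDeriv]
  simp [smul_smul]

lemma taylor_pow (r : ℝ) (f : Polynomial ℝ) (n : ℕ) :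
    taylor r (f ^ n) = (taylor r f) ^ n := by
  induction n with
  | zero => simp
  | succ k ih => rw [pow_succ, taylor_mul, ih, pow_succ]

lemma taylor_gp (r : ℝ) (n : ℕ) : taylor r (gp n) = ((X + C r)^2 - 1)^n := by
  unfold gp
  rw [taylor_pow]
  congr 1
  rw [map_sub, taylor_pow, taylor_X]
  simp

lemma taylor_one_gp (n : ℕ) : taylor (1:ℝ) (gp n) = ((X + C 2)^n) * X^n := by
  rw [taylor_gp, ← mul_pow]
  congr 1
  simp only [C_1, map_ofNat]
  ring

lemma taylor_neg_gp (n : ℕ) : taylor (-1:ℝ) (gp n) = ((X - C 2)^n) * X^n := by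
  rw [taylor_gp, ← mul_pow]
  congr 1
  simp only [map_neg, C_1, map_ofNat]
  ring

lemma evalD_one_lt {j n : ℕ} (h : j < n) : (derivative^[j] (gp n)).eval 1 = 0 := by
  rw [eval_iter_deriv, taylor_one_gp, coeff_mul_X_pow', if_neg (by omega)]
  ring

lemma evalD_neg_lt {j n : ℕ} (h : j < n) : (derivative^[j] (gp n)).eval (-1) = 0 := by
  rw [eval_iter_deriv, taylor_neg_gp, coeff_mul_X_pow', if_neg (by omega)]
  ring

lemma evalD_one_eq (n : ℕ) :
    (derivative^[n] (gp n)).eval 1 = (n.factorial : ℝ) * 2^n := by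
  rw [eval_iter_deriv, taylor_one_gp, coeff_mul_X_pow', if_pos le_rfl]
  simp [coeff_zero_eq_eval_zero]

lemma evalD_neg_eq (n : ℕ) :
    (derivative^[n] (gp n)).eval (-1) = (n.factorial : ℝ) * (-2)^n := by
  rw [eval_iter_deriv, taylor_neg_gp, coeff_mul_X_pow', if_pos le_rfl]
  simp [coeff_zero_eq_eval_zero]
lemma intable (f : Polynomial ℝ) : IntervalIntegrable (fun x => f.eval x) volume (-1:ℝ) 1 :=
  (f.continuous).intervalIntegrable _ _

lemma intable2 (f q : Polynomial ℝ) :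
    IntervalIntegrable (fun x => f.eval x * q.eval x) volume (-1:ℝ) 1 := by
  simpa using intable (f * q)

lemma poly_parts (f q : Polynomial ℝ) :
    ∫ x in (-1:ℝ)..1, (derivative f).eval x * q.eval x
      = f.eval 1 * q.eval 1 - f.eval (-1) * q.eval (-1)
        - ∫ x in (-1:ℝ)..1, f.eval x * (derivative q).eval x := by
  have h := integral_deriv_mul_eq_sub_of_hasDerivAt (a := (-1:ℝ)) (b := 1)
    (u := fun x => f.eval x) (v := fun x => q.eval x)
    (u' := fun x => (derivative f).eval x) (v' := fun x => (derivative q).eval x)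
    (f.continuous).continuousOn (q.continuous).continuousOn
    (fun x _ => f.hasDerivAt x) (fun x _ => q.hasDerivAt x)
    (intable _) (intable _)
  rw [integral_add (intable2 (derivative f) q) (intable2 f (derivative q))] at h
  linarith
lemma parts_step {k n : ℕ} (hk : k < n) (q : Polynomial ℝ) :
    ∫ x in (-1:ℝ)..1, (derivative^[k+1] (gp n)).eval x * q.eval x
      = - ∫ x in (-1:ℝ)..1, (derivative^[k] (gp n)).eval x * (derivative q).eval x := by
  have h := poly_parts (derivative^[k] (gp n)) q
  rw [← Function.iterate_succ_apply' derivative] at h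
  rw [h, evalD_one_lt hk, evalD_neg_lt hk]
  ring

lemma parts_iter {n : ℕ} {i : ℕ} (hi : i ≤ n) (q : Polynomial ℝ) :
    ∫ x in (-1:ℝ)..1, (derivative^[n] (gp n)).eval x * q.eval x
      = (-1:ℝ)^i * ∫ x in (-1:ℝ)..1, (derivative^[n-i] (gp n)).eval x * (derivative^[i] q).eval x := by
  induction i with
  | zero => simp
  | succ i ih =>
    rw [ih (by omega)]
    have hk : n - (i+1) < n := by omega
    have hni : n - i = (n - (i+1)) + 1 := by omega
    rw [hni, parts_step hk (derivative^[i] q), ← Function.iterate_succ_apply' derivative]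
    ring

lemma integral_Dn_mul {n : ℕ} {q : Polynomial ℝ} (hq : q.natDegree ≤ n) :
    ∫ x in (-1:ℝ)..1, (derivative^[n] (gp n)).eval x * q.eval x
      = (n.factorial : ℝ) * q.coeff n * ∫ x in (-1:ℝ)..1, (1 - x^2)^n := by
  rw [parts_iter le_rfl q, Nat.sub_self]
  have hconst : derivative^[n] q = C ((n.factorial : ℝ) * q.coeff n) := by
    have hd : (derivative^[n] q).natDegree = 0 := by
      have := natDegree_iterate_derivative q n
      omega
    rw [Polynomial.eq_C_of_natDegree_eq_zero hd]
    congr 1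
    rw [coeff_iterate_derivative]
    simp [Nat.descFactorial_self, nsmul_eq_mul]
  rw [hconst]
  simp only [Function.iterate_zero_apply, eval_C]
  rw [intervalIntegral.integral_mul_const]
  have h1 : ∀ x : ℝ, (1 - x^2)^n = (-1:ℝ)^n * (gp n).eval x := by
    intro x
    simp only [gp, eval_pow, eval_sub, eval_one, eval_X]
    rw [← mul_pow]
    ring
  have key : ∫ x in (-1:ℝ)..1, (1 - x^2)^n = (-1:ℝ)^n * ∫ x in (-1:ℝ)..1, (gp n).eval x := by
    rw [← intervalIntegral.integral_const_mul]
    exact intervalIntegral.integral_congr (fun x _ => h1 x)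
  rw [key]
  ring
lemma Icont (k : ℕ) : IntervalIntegrable (fun x : ℝ => (1-x^2)^k) volume (-1:ℝ) 1 := by
  apply Continuous.intervalIntegrable
  fun_prop

lemma I_rec (n : ℕ) : (2*(n:ℝ)+3) * (∫ x in (-1:ℝ)..1, (1-x^2)^(n+1))
    = (2*(n:ℝ)+2) * ∫ x in (-1:ℝ)..1, (1-x^2)^n := by
  have hderiv : ∀ x : ℝ, HasDerivAt (fun x : ℝ => x * (1-x^2)^(n+1))
      ((2*(n:ℝ)+3) * (1-x^2)^(n+1) - (2*(n:ℝ)+2) * (1-x^2)^n) x := by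
    intro x
    have h1 : HasDerivAt (fun x : ℝ => 1 - x^2) (-(2*x^1)) x := by
      simpa using (hasDerivAt_pow 2 x).const_sub 1
    have h3 : HasDerivAt (fun x : ℝ => x * (1-x^2)^(n+1))
        (1 * (1-x^2)^(n+1) + x * (((n+1:ℕ):ℝ) * (1-x^2)^n * -(2*x^1))) x :=
      (hasDerivAt_id x).mul (h1.pow (n+1))
    convert h3 using 1
    push_cast
    ring
  have hint : ∫ x in (-1:ℝ)..1, ((2*(n:ℝ)+3) * (1-x^2)^(n+1) - (2*(n:ℝ)+2) * (1-x^2)^n)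
      = (1:ℝ) * (1-1^2)^(n+1) - (-1) * (1-(-1:ℝ)^2)^(n+1) := by
    exact intervalIntegral.integral_eq_sub_of_hasDerivAt (f := fun x : ℝ => x*(1-x^2)^(n+1))
      (fun x _ => hderiv x) (by apply Continuous.intervalIntegrable; fun_prop)
  rw [intervalIntegral.integral_sub ((Icont (n+1)).const_mul _) ((Icont n).const_mul _),
    intervalIntegral.integral_const_mul, intervalIntegral.integral_const_mul] at hint
  simp at hint
  linarith

lemma I_formula (n : ℕ) : (∫ x in (-1:ℝ)..1, (1-x^2)^n)
    = 2^(2*n+1) * (n.factorial : ℝ)^2 / ((2*n+1).factorial : ℝ) := by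
  induction n with
  | zero => norm_num
  | succ n ih =>
    have hrec := I_rec n
    rw [ih] at hrec
    have h0 : (0:ℝ) < 2*(n:ℝ)+3 := by positivity
    have hne : ((2*n+1).factorial : ℝ) ≠ 0 := by positivity
    rw [show 2*(n+1)+1 = (2*n+1)+1+1 from by ring, Nat.factorial_succ, Nat.factorial_succ,
      Nat.factorial_succ]
    push_cast
    rw [eq_div_iff (by positivity)]
    field_simp at hrec
    linear_combination (2*(n:ℝ)+2) * hrec
noncomputable def LegP (n : ℕ) : Polynomial ℝ :=
  C (1/(2^n * (n.factorial : ℝ))) * derivative^[n] (gp n)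

lemma gp_monic (n : ℕ) : (gp n).Monic := by
  have : ((X:Polynomial ℝ)^2 - 1) = X^2 - C 1 := by simp
  unfold gp; rw [this]
  exact (monic_X_pow_sub_C (1:ℝ) (by norm_num)).pow n

lemma gp_natDegree (n : ℕ) : (gp n).natDegree = 2*n := by
  have : ((X:Polynomial ℝ)^2 - 1) = X^2 - C 1 := by simp
  unfold gp; rw [this, Polynomial.Monic.natDegree_pow (monic_X_pow_sub_C (1:ℝ) (by norm_num))]
  rw [natDegree_X_pow_sub_C]; ring

lemma LegP_natDegree_le (n : ℕ) : (LegP n).natDegree ≤ n := by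
  refine (natDegree_C_mul_le _ _).trans ?_
  have := natDegree_iterate_derivative (gp n) n
  rw [gp_natDegree] at this
  omega

lemma LegP_coeff (n : ℕ) :
    (LegP n).coeff n = ((2*n).descFactorial n : ℝ) / (2^n * (n.factorial : ℝ)) := by
  unfold LegP
  rw [coeff_C_mul, coeff_iterate_derivative]
  have h2n : n + n = (gp n).natDegree := by rw [gp_natDegree]; ring
  have : (gp n).coeff (n + n) = 1 := by rw [h2n]; exact (gp_monic n).coeff_natDegree
  rw [this]
  have : n + n = 2*n := by ring
  rw [this]
  simp [div_eq_mul_inv]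
  ring

lemma LegP_coeff_pos (n : ℕ) : 0 < (LegP n).coeff n := by
  rw [LegP_coeff]
  have : 0 < (2*n).descFactorial n := Nat.pos_of_ne_zero (by simp [Nat.descFactorial_eq_zero_iff_lt]; omega)
  positivity

lemma keyP {n : ℕ} {q : Polynomial ℝ} (hq : q.natDegree ≤ n) :
    ∫ x in (-1:ℝ)..1, (LegP n).eval x * q.eval x
      = q.coeff n * (2^(n+1) * (n.factorial : ℝ)^2 / ((2*n+1).factorial : ℝ)) := by
  unfold LegP
  simp only [eval_mul, eval_C]
  simp only [mul_assoc]
  rw [intervalIntegral.integral_const_mul, integral_Dn_mul hq, I_formula]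
  have h1 : (n.factorial : ℝ) ≠ 0 := by positivity
  have h2 : ((2*n+1).factorial : ℝ) ≠ 0 := by positivity
  have h3 : (2:ℝ)^n ≠ 0 := by positivity
  field_simp
  ring


lemma LegP_eval_one (n : ℕ) : (LegP n).eval 1 = 1 := by
  unfold LegP
  rw [eval_mul, eval_C, evalD_one_eq]
  have h1 : (n.factorial : ℝ) ≠ 0 := by positivity
  have h3 : (2:ℝ)^n ≠ 0 := by positivity
  field_simp

lemma LegP_orth {j k : ℕ} (h : j ≠ k) :
    ∫ x in (-1:ℝ)..1, (LegP j).eval x * (LegP k).eval x = 0 := by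
  rcases Nat.lt_or_ge j k with hlt | hge
  · rw [intervalIntegral.integral_congr (g := fun x => (LegP k).eval x * (LegP j).eval x)
      (fun x _ => mul_comm _ _), keyP ((LegP_natDegree_le j).trans hlt.le),
      coeff_eq_zero_of_natDegree_lt ((LegP_natDegree_le j).trans_lt hlt)]
    ring
  · have hlt : k < j := lt_of_le_of_ne hge (Ne.symm h)
    rw [keyP ((LegP_natDegree_le k).trans hlt.le),
      coeff_eq_zero_of_natDegree_lt ((LegP_natDegree_le k).trans_lt hlt)]
    ring

lemma LegP_norm (n : ℕ) :
    ∫ x in (-1:ℝ)..1, (LegP n).eval x * (LegP n).eval x = 2 / (2*(n:ℝ)+1) := by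
  rw [keyP (LegP_natDegree_le n), LegP_coeff]
  have hfac : ((n.factorial : ℝ)) * ((2*n).descFactorial n : ℝ) = ((2*n).factorial : ℝ) := by
    rw [← Nat.cast_mul]
    norm_cast
    have := Nat.factorial_mul_descFactorial (show n ≤ 2*n by omega)
    simpa [show 2*n - n = n by omega] using this
  have h2 : ((2*n+1).factorial : ℝ) = (2*(n:ℝ)+1) * ((2*n).factorial : ℝ) := by
    rw [Nat.factorial_succ]; push_cast; ring
  have h1 : (n.factorial : ℝ) ≠ 0 := by positivity
  have h3 : (2:ℝ)^n ≠ 0 := by positivity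
  have h4 : ((2*n).factorial : ℝ) ≠ 0 := by positivity
  have h5 : (2*(n:ℝ)+1) ≠ 0 := by positivity
  have h6 : ((2*n).descFactorial n : ℝ) ≠ 0 := by
    have : 0 < (2*n).descFactorial n :=
      Nat.pos_of_ne_zero (by simp [Nat.descFactorial_eq_zero_iff_lt]; omega)
    positivity
  rw [h2, ← hfac]
  field_simp
  ring

lemma LegP_zero : LegP 0 = 1 := by
  simp [LegP, gp]

lemma span_LegP : ∀ (d : ℕ) (v : Polynomial ℝ), v.natDegree ≤ d →
    ∃ α : ℕ → ℝ, v = ∑ j ∈ Finset.range (d+1), C (α j) * LegP j := by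
  intro d
  induction d with
  | zero =>
    intro v hv
    refine ⟨fun _ => v.coeff 0, ?_⟩
    rw [Finset.sum_range_one, LegP_zero, mul_one]
    exact Polynomial.eq_C_of_natDegree_le_zero hv
  | succ d ih =>
    intro v hv
    by_cases hd : v.natDegree ≤ d
    · obtain ⟨α, hα⟩ := ih v hd
      refine ⟨Function.update α (d+1) 0, ?_⟩
      rw [Finset.sum_range_succ, Function.update_self, map_zero, zero_mul, add_zero, hα]
      apply Finset.sum_congr rfl
      intro j hj
      rw [Function.update_of_ne (by simp at hj; omega)]
    · set c : ℝ := v.coeff (d+1) / (LegP (d+1)).coeff (d+1) with hc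
      set w : Polynomial ℝ := v - C c * LegP (d+1) with hw
      have hwc : w.coeff (d+1) = 0 := by
        rw [hw, coeff_sub, coeff_C_mul, hc,
          div_mul_cancel₀ _ (LegP_coeff_pos (d+1)).ne']
        ring
      have hwd : w.natDegree ≤ d := by
        rw [natDegree_le_iff_coeff_eq_zero]
        intro N hN
        rcases Nat.lt_or_ge (d+1) N with h1 | h1
        · rw [hw, coeff_sub, coeff_eq_zero_of_natDegree_lt (lt_of_le_of_lt hv h1),
            coeff_eq_zero_of_natDegree_lt
              (lt_of_le_of_lt ((natDegree_C_mul_le _ _).trans (LegP_natDegree_le _)) h1)]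
          ring
        · have : N = d+1 := by omega
          rw [this]; exact hwc
      obtain ⟨α, hα⟩ := ih w hwd
      refine ⟨Function.update α (d+1) c, ?_⟩
      rw [Finset.sum_range_succ, Function.update_self]
      have : ∑ j ∈ Finset.range (d+1), C (Function.update α (d+1) c j) * LegP j
          = ∑ j ∈ Finset.range (d+1), C (α j) * LegP j := by
        apply Finset.sum_congr rfl
        intro j hj
        rw [Function.update_of_ne (by simp at hj; omega)]
      rw [this, ← hα, hw]
      ring

lemma eval_sum_one (α : ℕ → ℝ) (p : ℕ) :
    (∑ j ∈ Finset.range (p+1), C (α j) * LegP j).eval 1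
      = ∑ j ∈ Finset.range (p+1), α j := by
  rw [eval_finset_sum]
  exact Finset.sum_congr rfl fun j _ => by rw [eval_mul, eval_C, LegP_eval_one, mul_one]

lemma integral_sq_sum (α : ℕ → ℝ) (p : ℕ) :
    ∫ x in (-1:ℝ)..1, ((∑ j ∈ Finset.range (p+1), C (α j) * LegP j).eval x)^2
      = ∑ j ∈ Finset.range (p+1), (α j)^2 * (2/(2*(j:ℝ)+1)) := by
  have hpt : ∀ x : ℝ, ((∑ j ∈ Finset.range (p+1), C (α j) * LegP j).eval x)^2
      = ∑ j ∈ Finset.range (p+1), ∑ k ∈ Finset.range (p+1),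
          (α j * α k) * ((LegP j).eval x * (LegP k).eval x) := by
    intro x
    rw [eval_finset_sum, sq, Finset.sum_mul_sum]
    exact Finset.sum_congr rfl fun j _ => Finset.sum_congr rfl fun k _ => by
      simp only [eval_mul, eval_C]; ring
  rw [intervalIntegral.integral_congr (fun x _ => hpt x)]
  rw [intervalIntegral.integral_finset_sum (fun j _ => by
    apply Continuous.intervalIntegrable
    exact continuous_finset_sum _ (fun k _ =>
      continuous_const.mul ((LegP j).continuous.mul (LegP k).continuous)))]
  refine Finset.sum_congr rfl fun j hj => ?_
  rw [intervalIntegral.integral_finset_sum (fun k _ => by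
    apply Continuous.intervalIntegrable
    exact continuous_const.mul ((LegP j).continuous.mul (LegP k).continuous))]
  rw [Finset.sum_eq_single j]
  · rw [intervalIntegral.integral_const_mul, LegP_norm]
    ring
  · intro k _ hk
    rw [intervalIntegral.integral_const_mul, LegP_orth (Ne.symm hk)]
    ring
  · intro h; exact absurd hj h

lemma sum_odd (p : ℕ) :
    ∑ j ∈ Finset.range (p+1), (2*(j:ℝ)+1) = ((p:ℝ)+1)^2 := by
  induction p with
  | zero => norm_num
  | succ p ih =>
    rw [Finset.sum_range_succ, ih]
    push_cast
    ring

lemma ioo_eq (f : ℝ → ℝ) :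
    ∫ t in Set.Ioo (-1:ℝ) 1, f t = ∫ t in (-1:ℝ)..1, f t := by
  rw [intervalIntegral.integral_of_le (by norm_num), MeasureTheory.integral_Ioc_eq_integral_Ioo]

/-- The minimum of `½ ∫_{-1}^{1} v(t)² dt` over polynomials `v` of degree at most `p`
with `v(1) = 1` equals `1/(p+1)²`. -/
theorem stmt_1 (p : ℕ) :
    IsLeast {I : ℝ | ∃ v : Polynomial ℝ, v.natDegree ≤ p ∧ v.eval 1 = 1 ∧
        I = (1 / 2) * ∫ t in Set.Ioo (-1 : ℝ) 1, (v.eval t) ^ 2}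
      (1 / ((p : ℝ) + 1) ^ 2) := by
  have hp1 : (0:ℝ) < ((p:ℝ)+1)^2 := by positivity
  constructor
  · -- membership
    refine ⟨∑ j ∈ Finset.range (p+1), C ((2*(j:ℝ)+1)/((p:ℝ)+1)^2) * LegP j, ?_, ?_, ?_⟩
    · apply Polynomial.natDegree_sum_le_of_forall_le
      intro j hj
      exact (natDegree_C_mul_le _ _).trans ((LegP_natDegree_le j).trans
        (by simp at hj; omega))
    · rw [eval_sum_one, ← Finset.sum_div, sum_odd, div_self hp1.ne']
    · rw [ioo_eq, integral_sq_sum]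
      have : ∑ j ∈ Finset.range (p+1), ((2*(j:ℝ)+1)/((p:ℝ)+1)^2)^2 * (2/(2*(j:ℝ)+1))
          = ∑ j ∈ Finset.range (p+1), (2*(j:ℝ)+1) * (2/((p:ℝ)+1)^4) := by
        refine Finset.sum_congr rfl fun j _ => ?_
        have hj : (2*(j:ℝ)+1) ≠ 0 := by positivity
        field_simp
      rw [this, ← Finset.sum_mul, sum_odd]
      field_simp
  · -- lower bound
    rintro I ⟨v, hdeg, hval, rfl⟩
    obtain ⟨α, hα⟩ := span_LegP p v hdeg
    subst hα
    rw [eval_sum_one] at hval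
    rw [ioo_eq, integral_sq_sum]
    set A := ∑ j ∈ Finset.range (p+1), (α j)^2 * (2/(2*(j:ℝ)+1)) with hA
    have hCS : (1:ℝ) ≤ ((p:ℝ)+1)^2 * ((1/2) * A) := by
      have key := Finset.sum_mul_sq_le_sq_mul_sq (Finset.range (p+1))
        (fun j => Real.sqrt (2*(j:ℝ)+1)) (fun j => α j / Real.sqrt (2*(j:ℝ)+1))
      have hfg : ∀ j ∈ Finset.range (p+1),
          Real.sqrt (2*(j:ℝ)+1) * (α j / Real.sqrt (2*(j:ℝ)+1)) = α j := by
        intro j _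
        have : Real.sqrt (2*(j:ℝ)+1) ≠ 0 := by
          refine ne_of_gt (Real.sqrt_pos.mpr (by positivity))
        field_simp
      have hf2 : ∀ j ∈ Finset.range (p+1),
          (Real.sqrt (2*(j:ℝ)+1))^2 = 2*(j:ℝ)+1 := by
        intro j _
        exact Real.sq_sqrt (by positivity)
      have hg2 : ∀ j ∈ Finset.range (p+1),
          (α j / Real.sqrt (2*(j:ℝ)+1))^2 = (α j)^2 * (2/(2*(j:ℝ)+1)) * (1/2) := by
        intro j _
        have h0 : (0:ℝ) < 2*(j:ℝ)+1 := by positivity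
        rw [div_pow, Real.sq_sqrt h0.le]
        field_simp
      rw [Finset.sum_congr rfl hfg, Finset.sum_congr rfl hf2,
        Finset.sum_congr rfl hg2, hval, sum_odd, ← Finset.sum_mul] at key
      calc (1:ℝ) = 1^2 := by norm_num
        _ ≤ ((p:ℝ)+1)^2 * (A * (1/2)) := key
        _ = ((p:ℝ)+1)^2 * ((1/2) * A) := by ring
    rw [div_le_iff₀ hp1]
    linarith
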